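/- Let Ω be a compact convex subset of the closed first quadrant {(x,y) : x ≥ 0, y ≥ 0} containing the points (0,0), (1,0) and (0,1) but not containing (1,1). Then the number of primitive integer vectors in 2Ω ∖ Ω exceeds (8/27)·area(2Ω ∖ Ω), i.e. dens(2Ω ∖ Ω) > 8/27. -/

import Mathlib

open Pointwise

noncomputable section

/-- Cross product of two vectors in ℝ²: `(a,b) × (c,d) = a d − b c`. -/
def crossP (u v : ℝ × ℝ) : ℝ := u.1 * v.2 - u.2 * v.1

/-- Euclidean inner product on ℝ². -/
def dotP (u v : ℝ × ℝ) : ℝ := u.1 * v.1 + u.2 * v.2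

/-- Euclidean norm on ℝ². -/
def nrm (u : ℝ × ℝ) : ℝ := Real.sqrt (u.1 ^ 2 + u.2 ^ 2)

/-- The set `Z` of primitive integer vectors. -/
def Zset : Set (ℝ × ℝ) := {v | ∃ p q : ℤ, Int.gcd p q = 1 ∧ v = ((p : ℝ), (q : ℝ))}

open MeasureTheory Set ENNReal

/-- Convex combination of two explicitly given points of a convex set. -/
lemma convexPairCombo {Ω : Set (ℝ × ℝ)} (hconv : Convex ℝ Ω) {x1 y1 x2 y2 a b x y : ℝ}
    (h1 : ((x1, y1) : ℝ × ℝ) ∈ Ω) (h2 : ((x2, y2) : ℝ × ℝ) ∈ Ω)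
    (ha : 0 ≤ a) (hb : 0 ≤ b) (hab : a + b = 1)
    (hx : x = a * x1 + b * x2) (hy : y = a * y1 + b * y2) :
    ((x, y) : ℝ × ℝ) ∈ Ω := by
  have h := hconv h1 h2 ha hb hab
  have e : a • ((x1, y1) : ℝ × ℝ) + b • ((x2, y2) : ℝ × ℝ) = ((x, y) : ℝ × ℝ) := by
    ext
    · simp [smul_eq_mul, hx]
    · simp [smul_eq_mul, hy]
  rwa [e] at h

set_option maxHeartbeats 2000000 in
/-- The main lemma, under the extra assumption that `Ω` has height `< 2`. -/
lemma key827 (Ω : Set (ℝ × ℝ)) (hcomp : IsCompact Ω) (hconv : Convex ℝ Ω)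
    (hquad : Ω ⊆ {p : ℝ × ℝ | 0 ≤ p.1 ∧ 0 ≤ p.2})
    (h00 : ((0 : ℝ), (0 : ℝ)) ∈ Ω) (h10 : ((1 : ℝ), (0 : ℝ)) ∈ Ω)
    (h01 : ((0 : ℝ), (1 : ℝ)) ∈ Ω) (h11 : ((1 : ℝ), (1 : ℝ)) ∉ Ω)
    (hh : ∀ p ∈ Ω, p.2 < 2) :
    (8 / 27 : ℝ) * (MeasureTheory.volume (((2 : ℝ) • Ω) \ Ω)).toReal <
      ((Zset ∩ (((2 : ℝ) • Ω) \ Ω)).ncard : ℝ) := by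
  classical
  obtain ⟨C, hC⟩ := hcomp.isBounded.exists_norm_le
  set row : ℝ → Set ℝ := fun t => {x | ((x, t) : ℝ × ℝ) ∈ Ω} with hrow_def
  have hrowBdd : ∀ t, BddAbove (row t) := by
    intro t
    refine ⟨C, fun x hx => ?_⟩
    have h1 : |x| ≤ ‖((x, t) : ℝ × ℝ)‖ := by
      simpa [Real.norm_eq_abs] using norm_fst_le ((x, t) : ℝ × ℝ)
    exact le_trans (le_abs_self x) (h1.trans (hC _ hx))
  have hrowCl : ∀ t, IsClosed (row t) := by
    intro t
    exact hcomp.isClosed.preimage (by fun_prop : Continuous fun x : ℝ => ((x, t) : ℝ × ℝ))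
  have hrow0 : ∀ t ∈ Icc (0:ℝ) 1, ((0:ℝ), t) ∈ Ω := by
    intro t ht
    exact convexPairCombo hconv h00 h01 (a := 1 - t) (b := t) (by linarith [ht.2]) ht.1
      (by ring) (by ring) (by ring)
  have hrowNe : ∀ t ∈ Icc (0:ℝ) 1, (row t).Nonempty := fun t ht => ⟨0, hrow0 t ht⟩
  set β : ℝ → ℝ := fun t => sSup (row t) with hβ_def
  have hβmem : ∀ t, (row t).Nonempty → ((β t, t) : ℝ × ℝ) ∈ Ω :=
    fun t hne => (hrowCl t).csSup_mem hne (hrowBdd t)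
  have hβle : ∀ t x, ((x, t) : ℝ × ℝ) ∈ Ω → x ≤ β t := fun t x hx => le_csSup (hrowBdd t) hx
  have hβ0 : ∀ t ∈ Icc (0:ℝ) 1, 0 ≤ β t := fun t ht => hβle t 0 (hrow0 t ht)
  set u := β (1/2) with hu_def
  set w := β 1 with hw_def
  have hhalf : ((1/2 : ℝ), (1/2 : ℝ)) ∈ Ω :=
    convexPairCombo hconv h10 h01 (a := 1/2) (b := 1/2) (by norm_num) (by norm_num)
      (by norm_num) (by norm_num) (by norm_num)
  have hu : 1/2 ≤ u := hβle _ _ hhalf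
  have hu0 : 0 ≤ u := by linarith
  have hw0 : 0 ≤ w := hβ0 1 (by norm_num)
  have hw1 : w < 1 := by
    by_contra hcon
    push_neg at hcon
    have hwmem : ((w, 1) : ℝ × ℝ) ∈ Ω := hβmem 1 ⟨0, hrow0 1 (by norm_num)⟩
    have hwpos : (0:ℝ) < w := by linarith
    refine h11 (convexPairCombo hconv h01 hwmem (a := 1 - 1/w) (b := 1/w) ?_ (by positivity)
      (by ring) (by field_simp; ring) (by ring))
    have : 1/w ≤ 1 := by rw [div_le_one hwpos]; linarith
    linarith
  have hmem_row : ∀ t ∈ Icc (0:ℝ) 1, ∀ x : ℝ, 0 ≤ x → x ≤ β t → ((x, t) : ℝ × ℝ) ∈ Ω := by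
    intro t ht x hx0 hxβ
    rcases eq_or_lt_of_le hx0 with h | h
    · exact h ▸ hrow0 t ht
    · have hβpos : 0 < β t := lt_of_lt_of_le h hxβ
      refine convexPairCombo hconv (hrow0 t ht) (hβmem t (hrowNe t ht))
        (a := 1 - x / β t) (b := x / β t) ?_ (by positivity) (by ring) (by field_simp; ring) (by ring)
      have : x / β t ≤ 1 := by rw [div_le_one hβpos]; exact hxβ
      linarith
  clear_value u w
  clear_value β
  clear_value row
  -- counting
  set n := Nat.floor (2*u) with hn_def
  have hn1 : 1 ≤ n := Nat.le_floor (by push_cast; linarith)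
  have hn2 : (n:ℝ) ≤ 2*u := Nat.floor_le (by linarith)
  have hn3 : 2*u < (n:ℝ) + 1 := Nat.lt_floor_add_one _
  clear_value n
  set D := ((2:ℝ) • Ω) \ Ω with hD_def
  have hrowpts : ∀ p : ℕ, p ∈ Finset.Icc 1 n → (((p:ℝ), (1:ℝ)) : ℝ × ℝ) ∈ Zset ∩ D := by
    intro p hp
    obtain ⟨hp1, hpn⟩ := Finset.mem_Icc.1 hp
    have hp1' : (1:ℝ) ≤ (p:ℝ) := by exact_mod_cast hp1
    have hpn' : (p:ℝ) ≤ (n:ℝ) := by exact_mod_cast hpn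
    have hpu : (p:ℝ)/2 ≤ β (1/2) := by rw [← hu_def]; linarith
    have hmem : (((p:ℝ)/2, (1/2:ℝ)) : ℝ × ℝ) ∈ Ω :=
      hmem_row (1/2) (by norm_num) _ (by positivity) hpu
    refine ⟨⟨(p:ℤ), 1, by simp, by push_cast; rfl⟩, ?_, ?_⟩
    · refine Set.mem_smul_set.2 ⟨((p:ℝ)/2, 1/2), hmem, ?_⟩
      ext <;> simp [smul_eq_mul] <;> ring
    · intro hmem'
      have := hβle 1 (p:ℝ) hmem'
      rw [← hw_def] at this
      linarith
  have h12mem : 1/2 ≤ w → (((1:ℝ), (2:ℝ)) : ℝ × ℝ) ∈ Zset ∩ D := by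
    intro hwhalf
    have hmem : (((1/2:ℝ), (1:ℝ)) : ℝ × ℝ) ∈ Ω := by
      refine hmem_row 1 (by norm_num) _ (by norm_num) ?_
      rw [← hw_def]; exact hwhalf
    refine ⟨⟨1, 2, by simp, by norm_num⟩, ?_, ?_⟩
    · refine Set.mem_smul_set.2 ⟨(1/2, 1), hmem, ?_⟩
      ext <;> simp [smul_eq_mul] <;> norm_num
    · intro hc
      have := hh _ hc
      norm_num at this
  -- finiteness of the primitive points in D
  have h2Ωcomp : IsCompact ((2:ℝ) • Ω) := by
    have := hcomp.image (continuous_const_smul (2:ℝ))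
    simpa [Set.image_smul] using this
  have hfinD : (Zset ∩ D).Finite := by
    obtain ⟨C₂, hC₂⟩ := h2Ωcomp.isBounded.exists_norm_le
    set M : ℤ := max ⌈C₂⌉ 0 with hM_def
    apply Set.Finite.subset ((Set.finite_Icc ((-M, -M) : ℤ × ℤ) ((M, M) : ℤ × ℤ)).image
      (fun q : ℤ × ℤ => (((q.1:ℝ), (q.2:ℝ)) : ℝ × ℝ)))
    rintro v ⟨⟨p, q, hg, rfl⟩, hvD⟩
    have hnorm := hC₂ _ hvD.1
    have h1 : |(p:ℝ)| ≤ C₂ := by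
      have := norm_fst_le (((p:ℝ), (q:ℝ)) : ℝ × ℝ)
      simp only [Real.norm_eq_abs] at this
      exact this.trans hnorm
    have h2 : |(q:ℝ)| ≤ C₂ := by
      have := norm_snd_le (((p:ℝ), (q:ℝ)) : ℝ × ℝ)
      simp only [Real.norm_eq_abs] at this
      exact this.trans hnorm
    have hMC : C₂ ≤ (M:ℝ) := by
      have h3 : C₂ ≤ (⌈C₂⌉ : ℝ) := Int.le_ceil C₂
      have h4 : (⌈C₂⌉ : ℝ) ≤ (M:ℝ) := by exact_mod_cast le_max_left _ _
      linarith
    refine ⟨(p, q), ?_, rfl⟩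
    rw [Set.mem_Icc]
    constructor
    · constructor
      · exact_mod_cast (by linarith [abs_le.1 (h1.trans hMC)] : -(M:ℝ) ≤ (p:ℝ))
      · exact_mod_cast (by linarith [abs_le.1 (h2.trans hMC)] : -(M:ℝ) ≤ (q:ℝ))
    · constructor
      · exact_mod_cast (abs_le.1 (h1.trans hMC)).2
      · exact_mod_cast (abs_le.1 (h2.trans hMC)).2
  set e : ℕ := if 1/2 ≤ w then 1 else 0 with he_def
  set F : Finset (ℝ × ℝ) :=
    (Finset.Icc 1 n).image (fun p : ℕ => (((p:ℝ), (1:ℝ)) : ℝ × ℝ)) ∪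
      (if 1/2 ≤ w then {(((1:ℝ), (2:ℝ)) : ℝ × ℝ)} else ∅) with hF_def
  have hFsub : ↑F ⊆ Zset ∩ D := by
    intro v hv
    rw [Finset.mem_coe, hF_def, Finset.mem_union] at hv
    rcases hv with hv | hv
    · obtain ⟨p, hp, rfl⟩ := Finset.mem_image.1 hv
      exact hrowpts p hp
    · split_ifs at hv with hwhalf
      · rw [Finset.mem_singleton] at hv
        exact hv ▸ h12mem hwhalf
      · simp at hv
  have hFcard : F.card = n + e := by
    rw [hF_def, Finset.card_union_of_disjoint]
    · have hinj : Function.Injective (fun p : ℕ => (((p:ℝ), (1:ℝ)) : ℝ × ℝ)) := by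
        intro a b hab
        have := congrArg Prod.fst hab
        simpa using Nat.cast_injective this
      rw [Finset.card_image_of_injective _ hinj, Nat.card_Icc]
      simp only [he_def]
      split_ifs <;> simp
    · rw [Finset.disjoint_left]
      intro a ha hb
      obtain ⟨p, _, rfl⟩ := Finset.mem_image.1 ha
      split_ifs at hb
      · rw [Finset.mem_singleton] at hb
        have := congrArg Prod.snd hb
        norm_num at this
      · simp at hb
  have hcount : ((n:ℝ) + (e:ℝ)) ≤ ((Zset ∩ D).ncard : ℝ) := by
    have h1 : (↑F : Set (ℝ × ℝ)).ncard ≤ (Zset ∩ D).ncard := Set.ncard_le_ncard hFsub hfinD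
    rw [Set.ncard_coe_finset, hFcard] at h1
    exact_mod_cast h1
  -- measure theory
  have hΩm : MeasurableSet Ω := hcomp.isClosed.measurableSet
  have hAfin : volume Ω ≠ ⊤ := hcomp.measure_lt_top.ne
  set Ar := (volume Ω).toReal with hAr_def
  have hβL : ∀ y : ℝ, 1 < y → ∀ x : ℝ, ((x, y) : ℝ × ℝ) ∈ Ω →
      x ≤ (2*y - 1)*w - (2*y - 2)*u := by
    intro y hy x hx
    have hne : (0:ℝ) < 2*y - 1 := by linarith
    have humem : ((u, (1/2:ℝ)) : ℝ × ℝ) ∈ Ω := by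
      rw [hu_def]; exact hβmem (1/2) (hrowNe _ (by norm_num))
    have h2 : ((1/(2*y-1))*x + (1 - 1/(2*y-1))*u, (1:ℝ)) ∈ Ω := by
      refine convexPairCombo hconv hx humem (a := 1/(2*y-1)) (b := 1 - 1/(2*y-1))
        (by positivity) ?_ (by ring) (by ring) (by field_simp; ring)
      have : 1/(2*y-1) ≤ 1 := by rw [div_le_one hne]; linarith
      linarith
    have h4 : (1/(2*y-1))*x + (1 - 1/(2*y-1))*u ≤ w := by
      have := hβle 1 _ h2
      rwa [← hw_def] at this
    have h5 : (2*y-1) * ((1/(2*y-1))*x + (1 - 1/(2*y-1))*u) = x + (2*y-2)*u := by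
      field_simp
      try ring
      try exact Or.inl trivial
    have h6 : x + (2*y-2)*u ≤ (2*y-1)*w := by
      rw [← h5]
      exact mul_le_mul_of_nonneg_left h4 hne.le
    linarith
  set S1 := Ω ∩ {p : ℝ × ℝ | p.2 ≤ 1} with hS1_def
  set S2 := Ω ∩ {p : ℝ × ℝ | 1 < p.2} with hS2_def
  have hS1m : MeasurableSet S1 := hΩm.inter (measurableSet_le measurable_snd measurable_const)
  have hS2m : MeasurableSet S2 := hΩm.inter (measurableSet_lt measurable_const measurable_snd)
  have hsplit : volume Ω = volume S1 + volume S2 := by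
    rw [← measure_union ?_ hS2m]
    · congr 1
      ext r
      simp only [hS1_def, hS2_def, Set.mem_union, Set.mem_inter_iff, mem_setOf_eq]
      constructor
      · intro hr
        by_cases h : r.2 ≤ 1
        · exact Or.inl ⟨hr, h⟩
        · exact Or.inr ⟨hr, lt_of_not_ge h⟩
      · rintro (⟨hr, _⟩ | ⟨hr, _⟩) <;> exact hr
    · rw [Set.disjoint_left]
      rintro p ⟨_, hp1⟩ ⟨_, hp2⟩
      simp only [mem_setOf_eq] at hp1 hp2
      linarith
  -- the strip 0 ≤ y ≤ 1 has volume at most u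
  have hslice1 : volume S1 ≤ ENNReal.ofReal u := by
    have hmeas : Measurable (fun y => volume {x | ((x, y) : ℝ × ℝ) ∈ S1}) :=
      measurable_measure_prodMk_right hS1m
    set φ := fun y : ℝ => volume {x | ((x, y) : ℝ × ℝ) ∈ S1} with hφ_def
    have hempty : ∀ t : ℝ, t ∉ Icc (0:ℝ) 1 → φ t = 0 := by
      intro t ht
      have h0 : {x | ((x, t) : ℝ × ℝ) ∈ S1} = ∅ := by
        ext x
        simp only [mem_empty_iff_false, iff_false, mem_setOf_eq]
        intro hx
        exact ht ⟨(hquad hx.1).2, hx.2⟩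
      simp only [hφ_def, h0, measure_empty]
    have hpt : ∀ y : ℝ, φ y + φ (1 - y) ≤
        (Icc (0:ℝ) 1).indicator (fun _ => ENNReal.ofReal (2*u)) y := by
      intro y
      by_cases hy : y ∈ Icc (0:ℝ) 1
      · rw [Set.indicator_of_mem hy]
        have hy' : 1 - y ∈ Icc (0:ℝ) 1 := ⟨by linarith [hy.2], by linarith [hy.1]⟩
        have hb : ∀ t ∈ Icc (0:ℝ) 1, φ t ≤ ENNReal.ofReal (β t) := by
          intro t ht
          have hsub : {x | ((x, t) : ℝ × ℝ) ∈ S1} ⊆ Icc 0 (β t) :=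
            fun x hx => ⟨(hquad hx.1).1, hβle t x hx.1⟩
          calc φ t ≤ volume (Icc 0 (β t)) := measure_mono hsub
            _ = ENNReal.ofReal (β t) := by rw [Real.volume_Icc, sub_zero]
        have hββ : β y + β (1 - y) ≤ 2*u := by
          have hm : (((β y + β (1-y))/2, (1/2:ℝ)) : ℝ × ℝ) ∈ Ω := by
            refine convexPairCombo hconv (hβmem y (hrowNe y hy)) (hβmem (1-y) (hrowNe _ hy'))
              (a := 1/2) (b := 1/2) (by norm_num) (by norm_num) (by norm_num)
              (by ring) (by ring)
          have := hβle (1/2) _ hm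
          rw [← hu_def] at this
          linarith
        calc φ y + φ (1 - y) ≤ ENNReal.ofReal (β y) + ENNReal.ofReal (β (1-y)) :=
              add_le_add (hb y hy) (hb _ hy')
          _ = ENNReal.ofReal (β y + β (1-y)) := (ENNReal.ofReal_add (hβ0 y hy) (hβ0 _ hy')).symm
          _ ≤ ENNReal.ofReal (2*u) := ENNReal.ofReal_le_ofReal hββ
      · rw [Set.indicator_of_notMem hy]
        have h1 : φ y = 0 := hempty y hy
        have h2 : φ (1 - y) = 0 := by
          refine hempty _ (fun hc => hy ⟨by linarith [hc.2], by linarith [hc.1]⟩)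
        simp [h1, h2]
    have hvol : volume S1 = ∫⁻ y, φ y := by
      rw [Measure.volume_eq_prod, Measure.prod_apply_symm hS1m]
      rfl
    have hrefl : ∫⁻ y, φ (1 - y) = ∫⁻ y, φ y :=
      (Measure.measurePreserving_sub_left volume 1).lintegral_comp hmeas
    have hsum : volume S1 + volume S1 ≤ ENNReal.ofReal u + ENNReal.ofReal u := by
      calc volume S1 + volume S1 = (∫⁻ y, φ y) + ∫⁻ y, φ (1 - y) := by rw [hvol, hrefl]
        _ = ∫⁻ y, (φ y + φ (1 - y)) := (lintegral_add_left hmeas _).symm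
        _ ≤ ∫⁻ y, (Icc (0:ℝ) 1).indicator (fun _ => ENNReal.ofReal (2*u)) y := lintegral_mono hpt
        _ = ∫⁻ _ in Icc (0:ℝ) 1, ENNReal.ofReal (2*u) := lintegral_indicator measurableSet_Icc _
        _ = ENNReal.ofReal (2*u) := by rw [setLIntegral_const, Real.volume_Icc]; simp
        _ = ENNReal.ofReal u + ENNReal.ofReal u := by
            rw [← ENNReal.ofReal_add hu0 hu0]; ring_nf
    by_contra hcon
    push_neg at hcon
    exact absurd hsum (by simpa using (ENNReal.add_lt_add hcon hcon).not_ge)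
  -- the upper part: general bound
  have hup : ∀ τ : ℝ, 1 ≤ τ → (∀ p ∈ S2, p.2 ≤ τ) →
      (∀ y ∈ Ioc (1:ℝ) τ, 0 ≤ (2*y - 1)*w - (2*y - 2)*u) →
      volume S2 ≤ ENNReal.ofReal ((2*w-2*u)*((τ^2-1)/2) + (τ-1)*(2*u-w)) := by
    intro τ hτ hbound hnn
    set L := fun y : ℝ => (2*w-2*u)*y + (2*u-w) with hL_def
    have hLeq : ∀ y : ℝ, L y = (2*y - 1)*w - (2*y - 2)*u := by
      intro y; simp only [hL_def]; ring
    have hmeas : Measurable (fun y => volume {x | ((x, y) : ℝ × ℝ) ∈ S2}) :=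
      measurable_measure_prodMk_right hS2m
    have hvol : volume S2 = ∫⁻ y, volume {x | ((x, y) : ℝ × ℝ) ∈ S2} := by
      rw [Measure.volume_eq_prod, Measure.prod_apply_symm hS2m]
      rfl
    have hpt : ∀ y : ℝ, volume {x | ((x, y) : ℝ × ℝ) ∈ S2} ≤
        (Ioc (1:ℝ) τ).indicator (fun y => ENNReal.ofReal (L y)) y := by
      intro y
      by_cases hy : y ∈ Ioc (1:ℝ) τ
      · rw [Set.indicator_of_mem hy]
        have hsub : {x | ((x, y) : ℝ × ℝ) ∈ S2} ⊆ Icc 0 ((2*y - 1)*w - (2*y - 2)*u) := by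
          intro x hx
          exact ⟨(hquad hx.1).1, hβL y hy.1 x hx.1⟩
        calc volume {x | ((x, y) : ℝ × ℝ) ∈ S2} ≤ volume (Icc 0 ((2*y-1)*w - (2*y-2)*u)) :=
              measure_mono hsub
          _ = ENNReal.ofReal ((2*y-1)*w - (2*y-2)*u - 0) := Real.volume_Icc
          _ = ENNReal.ofReal (L y) := by rw [sub_zero, ← hLeq]
      · rw [Set.indicator_of_notMem hy]
        have h0 : {x | ((x, y) : ℝ × ℝ) ∈ S2} = ∅ := by
          ext x
          simp only [mem_empty_iff_false, iff_false, mem_setOf_eq]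
          intro hx
          exact hy ⟨hx.2, hbound _ hx⟩
        simp [h0]
    have hLcont : Continuous L := by fun_prop
    calc volume S2 = ∫⁻ y, volume {x | ((x, y) : ℝ × ℝ) ∈ S2} := hvol
      _ ≤ ∫⁻ y, (Ioc (1:ℝ) τ).indicator (fun y => ENNReal.ofReal (L y)) y := lintegral_mono hpt
      _ = ∫⁻ y in Ioc (1:ℝ) τ, ENNReal.ofReal (L y) := lintegral_indicator measurableSet_Ioc _
      _ = ENNReal.ofReal (∫ y in Ioc (1:ℝ) τ, L y) := by
          rw [← ofReal_integral_eq_lintegral_ofReal (hLcont.integrableOn_Ioc)]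
          exact (ae_restrict_iff' measurableSet_Ioc).2
            (Filter.Eventually.of_forall (fun y hy => by rw [hLeq]; exact hnn y hy))
      _ = ENNReal.ofReal ((2*w-2*u)*((τ^2-1)/2) + (τ-1)*(2*u-w)) := by
          congr 1
          rw [← intervalIntegral.integral_of_le hτ]
          simp only [hL_def]
          rw [intervalIntegral.integral_add ((intervalIntegral.intervalIntegrable_id).const_mul _)
            (intervalIntegrable_const)]
          rw [intervalIntegral.integral_const_mul, integral_id, intervalIntegral.integral_const]
          simp only [smul_eq_mul, one_pow] <;> ring
  -- case split on the two area regimes, to conclude the real bound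
  have hArle : (3*w < 2*u ∧ Ar ≤ u + w^2/(4*(u-w))) ∨ (2*u ≤ 3*w ∧ Ar ≤ u + (2*w - u)) := by
    by_cases hcase : 3*w < 2*u
    · left
      refine ⟨hcase, ?_⟩
      have hwu : w < u := by linarith
      have huw : (0:ℝ) < u - w := by linarith
      set τ := 1 + w/(2*(u-w)) with hτ_def
      have hdiv0 : 0 ≤ w/(2*(u-w)) := by positivity
      have hτ1 : (1:ℝ) ≤ τ := by simp only [hτ_def]; linarith
      have hkeyτ : 2*(u-w) * (w/(2*(u-w))) = w := by field_simp
      have hboundS2 : ∀ p ∈ S2, p.2 ≤ τ := by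
        intro p hp
        by_contra hgt
        push_neg at hgt
        have hx := hβL p.2 hp.2 p.1 (by simpa using hp.1)
        have hq := (hquad hp.1).1
        have hkey : w < (2*p.2 - 2)*(u-w) := by
          have h1 : w/(2*(u-w)) < p.2 - 1 := by
            simp only [hτ_def] at hgt; linarith
          have h2 : 2*(u-w) * (w/(2*(u-w))) < 2*(u-w) * (p.2 - 1) :=
            mul_lt_mul_of_pos_left h1 (by linarith)
          rw [hkeyτ] at h2
          linarith [h2]
        nlinarith [hkey, hq, hx]
      have hnnτ : ∀ y ∈ Ioc (1:ℝ) τ, 0 ≤ (2*y - 1)*w - (2*y - 2)*u := by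
        intro y hy
        have h1 : y - 1 ≤ w/(2*(u-w)) := by
          have := hy.2; simp only [hτ_def] at this; linarith
        have h2 : 2*(u-w) * (y - 1) ≤ 2*(u-w) * (w/(2*(u-w))) :=
          mul_le_mul_of_nonneg_left h1 (by linarith)
        rw [hkeyτ] at h2
        nlinarith [h2]
      have hS2v := hup τ hτ1 hboundS2 hnnτ
      have hval : (2*w-2*u)*((τ^2-1)/2) + (τ-1)*(2*u-w) = w^2/(4*(u-w)) := by
        simp only [hτ_def]
        field_simp
        ring
      rw [hval] at hS2v
      have htot : volume Ω ≤ ENNReal.ofReal (u + w^2/(4*(u-w))) := by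
        rw [hsplit, ENNReal.ofReal_add hu0 (by positivity)]
        exact add_le_add hslice1 hS2v
      exact ENNReal.toReal_le_of_le_ofReal (by positivity) htot
    · right
      push_neg at hcase
      refine ⟨hcase, ?_⟩
      have hboundS2 : ∀ p ∈ S2, p.2 ≤ 2 := fun p hp => (hh p hp.1).le
      have hnn2 : ∀ y ∈ Ioc (1:ℝ) 2, 0 ≤ (2*y - 1)*w - (2*y - 2)*u := by
        intro y hy
        nlinarith [mul_le_mul_of_nonneg_left hcase (by linarith [hy.1] : (0:ℝ) ≤ y - 1),
          mul_nonneg hw0 (by linarith [hy.2] : (0:ℝ) ≤ 2 - y)]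
      have hS2v := hup 2 (by norm_num) hboundS2 hnn2
      have hval : (2*w-2*u)*(((2:ℝ)^2-1)/2) + ((2:ℝ)-1)*(2*u-w) = 2*w - u := by ring
      rw [hval] at hS2v
      have h2wu : 0 ≤ 2*w - u := by linarith
      have htot : volume Ω ≤ ENNReal.ofReal (u + (2*w - u)) := by
        rw [hsplit, ENNReal.ofReal_add hu0 h2wu]
        exact add_le_add hslice1 hS2v
      exact ENNReal.toReal_le_of_le_ofReal (by linarith) htot
  -- volume of D
  have hΩsub : Ω ⊆ (2:ℝ) • Ω := by
    intro z hz
    have hhz : (1/2 : ℝ) • z + (1/2 : ℝ) • ((0:ℝ), (0:ℝ)) ∈ Ω :=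
      hconv hz h00 (by norm_num) (by norm_num) (by norm_num)
    refine Set.mem_smul_set.2 ⟨(1/2 : ℝ) • z, by simpa [Prod.mk_zero_zero] using hhz, ?_⟩
    rw [smul_smul]
    norm_num
  have h2Ωvol : volume ((2:ℝ) • Ω) = 4 * volume Ω := by
    have hfr : Module.finrank ℝ (ℝ × ℝ) = 2 := by simp
    rw [Measure.addHaar_smul, hfr]
    norm_num
  have hDvol : volume D = 3 * volume Ω := by
    rw [hD_def, measure_diff hΩsub hΩm.nullMeasurableSet hAfin, h2Ωvol]
    have h4 : (4:ℝ≥0∞) * volume Ω = 3 * volume Ω + volume Ω := by ring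
    rw [h4, ENNReal.add_sub_cancel_right hAfin]
  have hDr : (volume D).toReal = 3 * Ar := by
    rw [hDvol, ENNReal.toReal_mul, hAr_def]
    norm_num
  -- final arithmetic
  have hgoal : 8 * Ar < 9 * ((n:ℝ) + (e:ℝ)) := by
    have hecase : (1/2 ≤ w ∧ (e:ℝ) = 1) ∨ (w < 1/2 ∧ (e:ℝ) = 0) := by
      by_cases hwhalf : 1/2 ≤ w
      · left; exact ⟨hwhalf, by rw [he_def, if_pos hwhalf]; norm_num⟩
      · right; exact ⟨by linarith [not_le.1 hwhalf], by rw [he_def, if_neg hwhalf]; norm_num⟩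
    have hn1' : (1:ℝ) ≤ (n:ℝ) := by exact_mod_cast hn1
    rcases hArle with ⟨hc, hA⟩ | ⟨hc, hA⟩
    · have huw : (0:ℝ) < u - w := by linarith
      rcases hecase with ⟨hwh, he1⟩ | ⟨hwh, he0⟩
      · -- w ≥ 1/2, e = 1 : q ≤ w/2
        have hq : w^2/(4*(u-w)) ≤ w/2 := by
          rw [div_le_iff₀ (by linarith : (0:ℝ) < 4*(u-w))]
          nlinarith [mul_nonneg hw0 (by linarith : (0:ℝ) ≤ 2*u - 3*w)]
        rw [he1]
        linarith
      · rw [he0]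
        by_cases h2n : 2 ≤ (n:ℝ)
        · have hu1 : 1 ≤ u := by linarith
          have hq : w^2/(4*(u-w)) ≤ w^2/2 := by
            apply div_le_div_of_nonneg_left (sq_nonneg w) (by norm_num)
            linarith
          nlinarith [sq_nonneg w]
        · have hnn1 : (n:ℝ) = 1 := by
            push_neg at h2n
            have : n < 2 := by exact_mod_cast h2n
            interval_cases n
            · norm_num
          rw [hnn1]
          have hu1 : u < 1 := by rw [hnn1] at hn3; linarith
          -- key polynomial positivity
          have hp : 0 < 9*(u-w) - 8*u*(u-w) - 2*w^2 := by
            by_cases h8 : 1 ≤ 8*(u-w)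
            · nlinarith [mul_nonneg (by linarith : (0:ℝ) ≤ 1 - u) (by linarith : (0:ℝ) ≤ 8*(u-w) - 1),
                mul_pos (by linarith : (0:ℝ) < 1 - 2*w) (by linarith : (0:ℝ) < 1 + w)]
            · push_neg at h8
              have hw14 : w < 1/4 := by linarith
              nlinarith [mul_nonneg (by linarith : (0:ℝ) ≤ 1 - u) (by linarith : (0:ℝ) ≤ u - w),
                mul_nonneg hw0 (by linarith : (0:ℝ) ≤ 1/4 - w)]
          set q := w^2/(4*(u-w)) with hq_def
          have hqe : q * (4*(u-w)) = w^2 := div_mul_cancel₀ _ (by linarith)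
          have h9 : 0 < (u - w) * (9 - 8*u - 8*q) := by nlinarith [hp, hqe]
          have h10 : 0 < 9 - 8*u - 8*q := by
            rcases mul_pos_iff.1 h9 with ⟨_, h⟩ | ⟨h, _⟩
            · exact h
            · linarith
          linarith
    · -- second regime : Ar ≤ 2w
      rcases hecase with ⟨hwh, he1⟩ | ⟨hwh, he0⟩
      · rw [he1]; linarith
      · rw [he0]; linarith
  calc (8 / 27 : ℝ) * (volume D).toReal = (8/27) * (3 * Ar) := by rw [hDr]
    _ < (n:ℝ) + (e:ℝ) := by linarith
    _ ≤ ((Zset ∩ D).ncard : ℝ) := hcount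

set_option maxHeartbeats 2000000 in
/-- Lemma "8/27".  If `Ω` is a compact convex subset of the first
quadrant containing `(0,0)`, `(1,0)`, `(0,1)` but not `(1,1)`, then the number of
primitive integer vectors in `2Ω ∖ Ω` exceeds `(8/27)·area(2Ω ∖ Ω)`. -/
theorem slowly_divergent_density_8_27
    (Ω : Set (ℝ × ℝ)) (hcomp : IsCompact Ω) (hconv : Convex ℝ Ω)
    (hquad : Ω ⊆ {p : ℝ × ℝ | 0 ≤ p.1 ∧ 0 ≤ p.2})
    (h00 : ((0 : ℝ), (0 : ℝ)) ∈ Ω) (h10 : ((1 : ℝ), (0 : ℝ)) ∈ Ω)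
    (h01 : ((0 : ℝ), (1 : ℝ)) ∈ Ω) (h11 : ((1 : ℝ), (1 : ℝ)) ∉ Ω) :
    (8 / 27 : ℝ) * (MeasureTheory.volume (((2 : ℝ) • Ω) \ Ω)).toReal <
      ((Zset ∩ (((2 : ℝ) • Ω) \ Ω)).ncard : ℝ) := by
  by_cases hcase : ∀ p ∈ Ω, p.2 < 2
  · exact key827 Ω hcomp hconv hquad h00 h10 h01 h11 hcase
  · push_neg at hcase
    obtain ⟨p, hp, hp2⟩ := hcase
    have hwidth : ∀ q ∈ Ω, q.1 < 2 := by
      intro q hq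
      by_contra hq2
      push_neg at hq2
      apply h11
      have hp2pos : (0:ℝ) < p.2 := by linarith
      have hq1pos : (0:ℝ) < q.1 := by linarith
      have hp1nn := (hquad hp).1
      have hq2nn := (hquad hq).2
      have hpp : ((p.1, p.2) : ℝ × ℝ) ∈ Ω := by simpa using hp
      have hqq : ((q.1, q.2) : ℝ × ℝ) ∈ Ω := by simpa using hq
      have ha : ((2*p.1/p.2, (2:ℝ)) : ℝ × ℝ) ∈ Ω := by
        refine convexPairCombo hconv h00 hpp (a := 1 - 2/p.2) (b := 2/p.2) ?_ (by positivity)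
          (by ring) (by field_simp <;> ring) (by field_simp <;> ring)
        have : 2/p.2 ≤ 1 := by rw [div_le_one hp2pos]; linarith
        linarith
      have hb : (((2:ℝ), 2*q.2/q.1) : ℝ × ℝ) ∈ Ω := by
        refine convexPairCombo hconv h00 hqq (a := 1 - 2/q.1) (b := 2/q.1) ?_ (by positivity)
          (by ring) (by field_simp <;> ring) (by field_simp <;> ring)
        have : 2/q.1 ≤ 1 := by rw [div_le_one hq1pos]; linarith
        linarith
      set X := (1/2)*(2*p.1/p.2) + (1/2)*2 with hX_def
      set Y := (1/2)*2 + (1/2)*(2*q.2/q.1) with hY_def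
      have hm : ((X, Y) : ℝ × ℝ) ∈ Ω :=
        convexPairCombo hconv ha hb (a := 1/2) (b := 1/2) (by norm_num) (by norm_num)
          (by norm_num) (by ring) (by ring)
      have hX1 : 1 ≤ X := by
        have : 0 ≤ 2*p.1/p.2 := by positivity
        simp only [hX_def]; linarith
      have hY1 : 1 ≤ Y := by
        have : 0 ≤ 2*q.2/q.1 := by positivity
        simp only [hY_def]; linarith
      by_cases hdeg : X + Y ≤ 2
      · have hX1' : X = 1 := by linarith
        have hY1' : Y = 1 := by linarith
        rwa [hX1', hY1'] at hm
      · push_neg at hdeg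
        have hD2 : (0:ℝ) < X + Y - 2 := by linarith
        have hD1 : (0:ℝ) < X + Y - 1 := by linarith
        have hz : (((Y-1)/(X+Y-2), (X-1)/(X+Y-2)) : ℝ × ℝ) ∈ Ω := by
          refine convexPairCombo hconv h10 h01 (a := (Y-1)/(X+Y-2)) (b := (X-1)/(X+Y-2))
            (div_nonneg (by linarith) (by linarith)) (div_nonneg (by linarith) (by linarith))
            (by field_simp <;> ring) (by ring) (by ring)
        refine convexPairCombo hconv hz hm (a := (X+Y-2)/(X+Y-1)) (b := 1/(X+Y-1))
          (div_nonneg (by linarith) (by linarith)) (div_nonneg (by norm_num) (by linarith))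
          (by field_simp <;> ring) ?_ ?_
        · field_simp
          ring
        · field_simp
          ring
    -- swap the coordinates
    have hinj : Function.Injective (Prod.swap : ℝ × ℝ → ℝ × ℝ) := Prod.swap_injective
    set Ω' := Prod.swap '' Ω with hΩ'_def
    have hswapsmul : ∀ (S : Set (ℝ × ℝ)), (2:ℝ) • (Prod.swap '' S) = Prod.swap '' ((2:ℝ) • S) := by
      intro S
      ext z
      constructor
      · rintro ⟨_, ⟨y, hy, rfl⟩, rfl⟩
        exact ⟨(2:ℝ) • y, smul_mem_smul_set hy, by ext <;> simp⟩
      · rintro ⟨_, ⟨y, hy, rfl⟩, rfl⟩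
        exact ⟨Prod.swap y, ⟨y, hy, rfl⟩, by ext <;> simp⟩
    have hcomp' : IsCompact Ω' := hcomp.image continuous_swap
    have hconv' : Convex ℝ Ω' := by
      rintro _ ⟨x, hx, rfl⟩ _ ⟨y, hy, rfl⟩ a b ha hb hab
      exact ⟨a • x + b • y, hconv hx hy ha hb hab, by ext <;> simp⟩
    have hquad' : Ω' ⊆ {r : ℝ × ℝ | 0 ≤ r.1 ∧ 0 ≤ r.2} := by
      rintro _ ⟨z, hz, rfl⟩
      exact ⟨(hquad hz).2, (hquad hz).1⟩
    have h00' : ((0:ℝ), (0:ℝ)) ∈ Ω' := ⟨((0:ℝ), (0:ℝ)), h00, rfl⟩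
    have h10' : ((1:ℝ), (0:ℝ)) ∈ Ω' := ⟨((0:ℝ), (1:ℝ)), h01, rfl⟩
    have h01' : ((0:ℝ), (1:ℝ)) ∈ Ω' := ⟨((1:ℝ), (0:ℝ)), h10, rfl⟩
    have h11' : ((1:ℝ), (1:ℝ)) ∉ Ω' := by
      rintro ⟨z, hz, hzq⟩
      apply h11
      have : z = ((1:ℝ), (1:ℝ)) := by
        have := congrArg Prod.swap hzq
        simpa using this
      rwa [this] at hz
    have hh' : ∀ r ∈ Ω', r.2 < 2 := by
      rintro _ ⟨z, hz, rfl⟩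
      exact hwidth z hz
    have H := key827 Ω' hcomp' hconv' hquad' h00' h10' h01' h11' hh'
    have hdiff : ((2:ℝ) • Ω') \ Ω' = Prod.swap '' (((2:ℝ) • Ω) \ Ω) := by
      rw [hΩ'_def, hswapsmul, ← Set.image_diff hinj]
    have hDm : MeasurableSet (((2:ℝ) • Ω) \ Ω) := by
      have h2c : IsCompact ((2:ℝ) • Ω) := by
        have := hcomp.image (continuous_const_smul (2:ℝ))
        simpa [Set.image_smul] using this
      exact h2c.isClosed.measurableSet.diff hcomp.isClosed.measurableSet
    have hmp : MeasurePreserving (Prod.swap : ℝ × ℝ → ℝ × ℝ) volume volume := by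
      rw [Measure.volume_eq_prod]
      exact Measure.measurePreserving_swap
    have hvol' : volume (((2:ℝ) • Ω') \ Ω') = volume (((2:ℝ) • Ω) \ Ω) := by
      rw [hdiff, show Prod.swap '' (((2:ℝ) • Ω) \ Ω) = Prod.swap ⁻¹' (((2:ℝ) • Ω) \ Ω) from
        congrFun Set.image_swap_eq_preimage_swap _]
      exact hmp.measure_preimage hDm.nullMeasurableSet
    have hZ : Prod.swap '' Zset = Zset := by
      ext v
      constructor
      · rintro ⟨_, ⟨a, b, hg, rfl⟩, rfl⟩
        exact ⟨b, a, by rwa [Int.gcd_comm], rfl⟩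
      · rintro ⟨a, b, hg, rfl⟩
        exact ⟨((b:ℝ), (a:ℝ)), ⟨b, a, by rwa [Int.gcd_comm], rfl⟩, rfl⟩
    have hz' : Zset ∩ (((2:ℝ) • Ω') \ Ω') = Prod.swap '' (Zset ∩ (((2:ℝ) • Ω) \ Ω)) := by
      rw [hdiff, Set.image_inter hinj, hZ]
    have hn' : (Zset ∩ (((2:ℝ) • Ω') \ Ω')).ncard = (Zset ∩ (((2:ℝ) • Ω) \ Ω)).ncard := by
      rw [hz', Set.ncard_image_of_injective _ hinj]
    rw [hvol', hn'] at H
    exact H
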